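/- Let h₊₊, h₋₋, Z : ℝ² → ℝ be smooth, write ∂_+ and ∂_− for the two partial derivatives, set y := h₊₊·h₋₋, and assume y(x) ≠ 1 for all x. Define W⁻ := (1−y)^{−1}(∂_−Z − h₋₋·∂_+Z) and W⁺ := (1−y)^{−1}(∂_+Z − h₊₊·∂_−Z). Then pointwise: ∂_+W⁻ − h₊₊·∂_−W⁻ − (∂_−h₊₊)·W⁻ = ∂_−W⁺ − h₋₋·∂_+W⁺ − (∂_+h₋₋)·W⁺ = ½ ∂_+[ ((1+y)/(1−y))·∂_−Z − (2h₋₋/(1−y))·∂_+Z ] + ½ ∂_−[ ((1+y)/(1−y))·∂_+Z − (2h₊₊/(1−y))·∂_−Z ]. -/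

import Mathlib

noncomputable section

/-- Partial derivative of `f` at `x` in the `μ`-th coordinate direction; on the world-sheet
`ℝ²` the coordinate `0` is `x⁺` and the coordinate `1` is `x⁻`. -/
def pd (μ : Fin 2) (f : (Fin 2 → ℝ) → ℝ) (x : Fin 2 → ℝ) : ℝ :=
  fderiv ℝ f x (Pi.single μ 1)

/-- `W⁻ = (1−y)⁻¹(∂₋Z − h₋₋∂₊Z)` where `y = h₊₊h₋₋`. -/
def Wm (hpp hmm Z : (Fin 2 → ℝ) → ℝ) (x : Fin 2 → ℝ) : ℝ :=
  (1 - hpp x * hmm x)⁻¹ * (pd 1 Z x - hmm x * pd 0 Z x)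

/-- `W⁺ = (1−y)⁻¹(∂₊Z − h₊₊∂₋Z)` where `y = h₊₊h₋₋`. -/
def Wp (hpp hmm Z : (Fin 2 → ℝ) → ℝ) (x : Fin 2 → ℝ) : ℝ :=
  (1 - hpp x * hmm x)⁻¹ * (pd 0 Z x - hpp x * pd 1 Z x)

/-- The right-hand side
`½∂₊[((1+y)/(1−y))∂₋Z − (2h₋₋/(1−y))∂₊Z] + ½∂₋[((1+y)/(1−y))∂₊Z − (2h₊₊/(1−y))∂₋Z]`. -/
def RHS (hpp hmm Z : (Fin 2 → ℝ) → ℝ) (x : Fin 2 → ℝ) : ℝ :=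
  pd 0 (fun z => ((1 + hpp z * hmm z) / (1 - hpp z * hmm z)) * pd 1 Z z
      - (2 * hmm z / (1 - hpp z * hmm z)) * pd 0 Z z) x / 2
    + pd 1 (fun z => ((1 + hpp z * hmm z) / (1 - hpp z * hmm z)) * pd 0 Z z
      - (2 * hpp z / (1 - hpp z * hmm z)) * pd 1 Z z) x / 2

/- ### Auxiliary calculus lemmas for `pd` -/

lemma pd_add {f g : (Fin 2 → ℝ) → ℝ} {x : Fin 2 → ℝ} (μ : Fin 2)
    (hf : DifferentiableAt ℝ f x) (hg : DifferentiableAt ℝ g x) :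
    pd μ (fun z => f z + g z) x = pd μ f x + pd μ g x := by
  simp [pd, fderiv_fun_add hf hg]

lemma pd_sub {f g : (Fin 2 → ℝ) → ℝ} {x : Fin 2 → ℝ} (μ : Fin 2)
    (hf : DifferentiableAt ℝ f x) (hg : DifferentiableAt ℝ g x) :
    pd μ (fun z => f z - g z) x = pd μ f x - pd μ g x := by
  simp [pd, fderiv_fun_sub hf hg]

lemma pd_mul {f g : (Fin 2 → ℝ) → ℝ} {x : Fin 2 → ℝ} (μ : Fin 2)
    (hf : DifferentiableAt ℝ f x) (hg : DifferentiableAt ℝ g x) :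
    pd μ (fun z => f z * g z) x = pd μ f x * g x + f x * pd μ g x := by
  simp [pd, fderiv_fun_mul hf hg]; ring

lemma pd_const (μ : Fin 2) (c : ℝ) (x : Fin 2 → ℝ) : pd μ (fun _ => c) x = 0 := by
  simp [pd]

lemma pd_inv {f : (Fin 2 → ℝ) → ℝ} {x : Fin 2 → ℝ} (μ : Fin 2)
    (hf : DifferentiableAt ℝ f x) (h0 : f x ≠ 0) :
    pd μ (fun z => (f z)⁻¹) x = -(f x ^ 2)⁻¹ * pd μ f x := by
  have h : HasFDerivAt (fun z => (f z)⁻¹) ((-(f x ^ 2)⁻¹) • fderiv ℝ f x) x :=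
    (hasDerivAt_inv h0).comp_hasFDerivAt x hf.hasFDerivAt
  simp only [pd, h.fderiv]
  simp

lemma pd_smooth {f : (Fin 2 → ℝ) → ℝ} (μ : Fin 2) (hf : ContDiff ℝ (⊤ : ℕ∞) f) :
    ContDiff ℝ (⊤ : ℕ∞) (pd μ f) := by
  have h : ContDiff ℝ (⊤ : ℕ∞) (fun x => fderiv ℝ f x) :=
    hf.fderiv_right (m := (⊤ : ℕ∞)) le_rfl
  exact h.clm_apply contDiff_const

lemma pd_comm {f : (Fin 2 → ℝ) → ℝ} (hf : ContDiff ℝ (⊤ : ℕ∞) f) (x : Fin 2 → ℝ)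
    (μ ν : Fin 2) : pd μ (pd ν f) x = pd ν (pd μ f) x := by
  have hd : Differentiable ℝ f := hf.differentiable (by simp)
  have hclm : ∀ (κ : Fin 2), pd κ f = fun z => (fderiv ℝ f z) (Pi.single κ 1) := by
    intro κ; rfl
  have hfd : DifferentiableAt ℝ (fun z => fderiv ℝ f z) x := by
    have : ContDiff ℝ (⊤ : ℕ∞) (fun z => fderiv ℝ f z) :=
      hf.fderiv_right (m := (⊤ : ℕ∞)) le_rfl
    exact (this.differentiable (by simp)) x
  have key : ∀ (κ ν : Fin 2),
      pd κ (pd ν f) x = fderiv ℝ (fderiv ℝ f) x (Pi.single κ 1) (Pi.single ν 1) := by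
    intro κ ν
    rw [hclm ν]
    simp only [pd]
    rw [fderiv_clm_apply hfd (differentiableAt_const _)]
    simp
  rw [key, key]
  exact second_derivative_symmetric (fun y => (hd y).hasFDerivAt) hfd.hasFDerivAt _ _

set_option maxHeartbeats 1000000 in
/-- The Beltrami identity `∇₊(1−y)⁻¹∇₋Z = ∇₋(1−y)⁻¹∇₊Z = ½∂_α(√g g^{αβ}∂_βZ)`
for a scalar `Z`. -/
theorem stmt17 (hpp hmm Z : (Fin 2 → ℝ) → ℝ)
    (h1 : ContDiff ℝ (⊤ : ℕ∞) hpp) (h2 : ContDiff ℝ (⊤ : ℕ∞) hmm)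
    (h3 : ContDiff ℝ (⊤ : ℕ∞) Z)
    (hy : ∀ x, hpp x * hmm x ≠ 1) :
    ∀ x,
      (pd 0 (Wm hpp hmm Z) x - hpp x * pd 1 (Wm hpp hmm Z) x
          - pd 1 hpp x * Wm hpp hmm Z x = RHS hpp hmm Z x) ∧
      (pd 1 (Wp hpp hmm Z) x - hmm x * pd 0 (Wp hpp hmm Z) x
          - pd 0 hmm x * Wp hpp hmm Z x = RHS hpp hmm Z x) := by
  intro x
  have hA : Differentiable ℝ hpp := h1.differentiable (by simp)
  have hB : Differentiable ℝ hmm := h2.differentiable (by simp)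
  have hZ0 : Differentiable ℝ (pd 0 Z) := (pd_smooth 0 h3).differentiable (by simp)
  have hZ1 : Differentiable ℝ (pd 1 Z) := (pd_smooth 1 h3).differentiable (by simp)
  have hne : ∀ z, 1 - hpp z * hmm z ≠ 0 := fun z => sub_ne_zero_of_ne (Ne.symm (hy z))
  have hden : Differentiable ℝ (fun z => 1 - hpp z * hmm z) :=
    (differentiable_const 1).sub (hA.mul hB)
  have hdinv : Differentiable ℝ (fun z => (1 - hpp z * hmm z)⁻¹) := by
    intro z; exact (hden z).inv (hne z)
  have hWm : Wm hpp hmm Z = fun z => (1 - hpp z * hmm z)⁻¹ * (pd 1 Z z - hmm z * pd 0 Z z) :=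
    rfl
  have hWp : Wp hpp hmm Z = fun z => (1 - hpp z * hmm z)⁻¹ * (pd 0 Z z - hpp z * pd 1 Z z) :=
    rfl
  have hcomm := pd_comm h3 x
  rw [hWm, hWp]
  simp only [Wm, Wp, RHS, div_eq_mul_inv]
  constructor <;>
  · simp (disch := first | exact hne _ | fun_prop (disch := exact hne _)) only
      [pd_sub, pd_add, pd_mul, pd_inv, pd_const]
    rw [hcomm 0 1]
    have h10 := hne x
    set A := hpp x
    set B := hmm x
    set A0 := pd 0 hpp x
    set A1 := pd 1 hpp x
    set B0 := pd 0 hmm x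
    set B1 := pd 1 hmm x
    set P := pd 0 Z x
    set M := pd 1 Z x
    set P0 := pd 0 (pd 0 Z) x
    set M1 := pd 1 (pd 1 Z) x
    set C := pd 1 (pd 0 Z) x
    field_simp
    ring
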